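/- Let 𝔄 and 𝔅 be Banach algebras, let σ : 𝔄 → 𝔅 be a surjective continuous linear map, and let d : 𝔄 → 𝔅 be a σ-derivation. Then the separating space 𝔖(d) is a closed two-sided ideal of 𝔅. -/

import Mathlib

open Filter Topology

/-- The separating space `𝔖(T)` of a linear map `T` between normed spaces: all `z`
for which there is a sequence `yₙ → 0` with `T yₙ → z`. -/
def separatingSpace {A B : Type*} [NonUnitalNormedRing A] [NonUnitalNormedRing B]
    [NormedSpace ℂ A] [NormedSpace ℂ B] (T : A →ₗ[ℂ] B) : Set B :=
  {z | ∃ y : ℕ → A, Tendsto y atTop (𝓝 0) ∧ Tendsto (fun n => T (y n)) atTop (𝓝 z)}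

lemma mem_sep_iff {A B : Type*} [NonUnitalNormedRing A] [NonUnitalNormedRing B]
    [NormedSpace ℂ A] [NormedSpace ℂ B] (T : A →ₗ[ℂ] B) (z : B) :
    z ∈ separatingSpace T ↔ ∀ ε > 0, ∃ u : A, ‖u‖ < ε ∧ ‖T u - z‖ < ε := by
  constructor
  · rintro ⟨y, hy0, hyz⟩ ε hε
    have h1 : ∀ᶠ n in atTop, ‖y n‖ < ε := by
      have := (tendsto_zero_iff_norm_tendsto_zero.mp hy0).eventually
        (eventually_lt_nhds hε)
      simpa using this
    have h2 : ∀ᶠ n in atTop, ‖T (y n) - z‖ < ε := by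
      have := (tendsto_iff_norm_sub_tendsto_zero.mp hyz).eventually
        (eventually_lt_nhds hε)
      simpa using this
    obtain ⟨n, hn1, hn2⟩ := (h1.and h2).exists
    exact ⟨y n, hn1, hn2⟩
  · intro h
    choose u hu1 hu2 using fun n : ℕ => h (1 / (n + 1)) (by positivity)
    refine ⟨u, ?_, ?_⟩
    · rw [tendsto_zero_iff_norm_tendsto_zero]
      exact squeeze_zero (fun n => norm_nonneg _) (fun n => (hu1 n).le)
        tendsto_one_div_add_atTop_nhds_zero_nat
    · rw [tendsto_iff_norm_sub_tendsto_zero]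
      exact squeeze_zero (fun n => norm_nonneg _) (fun n => (hu2 n).le)
        tendsto_one_div_add_atTop_nhds_zero_nat

/-- **From the proof of Proposition 2.5.** If `𝔄`, `𝔅` are Banach algebras,
`σ : 𝔄 → 𝔅` is a surjective continuous linear map and `d : 𝔄 → 𝔅` is a
`σ`-derivation, then `𝔖(d)` is a closed two-sided ideal of `𝔅`. -/
theorem stmt_4 {A B : Type*} [NonUnitalNormedRing A] [NonUnitalNormedRing B]
    [NormedSpace ℂ A] [NormedSpace ℂ B] [CompleteSpace A] [CompleteSpace B]
    (σ d : A →ₗ[ℂ] B) (hσ : Continuous σ) (hσsurj : Function.Surjective σ)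
    (hd : ∀ x y : A, d (x * y) = d x * σ y + σ x * d y) :
    IsClosed (separatingSpace d) ∧
      ∃ I : TwoSidedIdeal B, (I : Set B) = separatingSpace d := by
  have hclosed : IsClosed (separatingSpace d) := by
    rw [← closure_subset_iff_isClosed]
    intro z hz
    rw [mem_sep_iff]
    intro ε hε
    obtain ⟨w, hw, hwz⟩ := Metric.mem_closure_iff.mp hz (ε / 2) (by positivity)
    obtain ⟨u, hu1, hu2⟩ := (mem_sep_iff d w).mp hw (ε / 2) (by positivity)
    refine ⟨u, by linarith, ?_⟩
    calc ‖d u - z‖ = ‖(d u - w) + (w - z)‖ := by rw [sub_add_sub_cancel]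
      _ ≤ ‖d u - w‖ + ‖w - z‖ := norm_add_le _ _
      _ < ε / 2 + ε / 2 := by
          have : ‖w - z‖ < ε / 2 := by
            rw [← dist_eq_norm]; rw [dist_comm] at hwz; exact hwz
          linarith
      _ = ε := by ring
  refine ⟨hclosed, ?_⟩
  have zero_mem : (0 : B) ∈ separatingSpace d :=
    ⟨fun _ => 0, tendsto_const_nhds, by simp⟩
  have add_mem : ∀ {x y : B}, x ∈ separatingSpace d → y ∈ separatingSpace d →
      x + y ∈ separatingSpace d := by
    rintro x y ⟨u, hu0, hux⟩ ⟨v, hv0, hvy⟩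
    exact ⟨fun n => u n + v n, by simpa using hu0.add hv0,
      by simpa using hux.add hvy⟩
  have neg_mem : ∀ {x : B}, x ∈ separatingSpace d → -x ∈ separatingSpace d := by
    rintro x ⟨u, hu0, hux⟩
    exact ⟨fun n => -u n, by simpa using hu0.neg, by simpa using hux.neg⟩
  have mul_mem_left : ∀ {x y : B}, y ∈ separatingSpace d → x * y ∈ separatingSpace d := by
    rintro x y ⟨u, hu0, huy⟩
    obtain ⟨a, rfl⟩ := hσsurj x
    refine ⟨fun n => a * u n, by simpa using tendsto_const_nhds.mul hu0, ?_⟩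
    have hσ0 : Tendsto (fun n => σ (u n)) atTop (𝓝 0) := by
      simpa [Function.comp_def] using (hσ.tendsto 0).comp hu0
    have : Tendsto (fun n => d a * σ (u n) + σ a * d (u n)) atTop (𝓝 (d a * 0 + σ a * y)) :=
      (tendsto_const_nhds.mul hσ0).add (tendsto_const_nhds.mul huy)
    simp only [hd, map_zero] at this ⊢
    simpa using this
  have mul_mem_right : ∀ {x y : B}, x ∈ separatingSpace d → x * y ∈ separatingSpace d := by
    rintro x y ⟨u, hu0, hux⟩
    obtain ⟨a, rfl⟩ := hσsurj y
    refine ⟨fun n => u n * a, by simpa using hu0.mul tendsto_const_nhds, ?_⟩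
    have hσ0 : Tendsto (fun n => σ (u n)) atTop (𝓝 0) := by
      simpa [Function.comp_def] using (hσ.tendsto 0).comp hu0
    have : Tendsto (fun n => d (u n) * σ a + σ (u n) * d a) atTop (𝓝 (x * σ a + 0 * d a)) :=
      (hux.mul tendsto_const_nhds).add (hσ0.mul tendsto_const_nhds)
    simp only [hd, map_zero] at this ⊢
    simpa using this
  exact ⟨TwoSidedIdeal.mk' _ zero_mem add_mem neg_mem mul_mem_left mul_mem_right,
    TwoSidedIdeal.coe_mk' ..⟩
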